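/- For the curve R(t) = sin t + i·ξ(t), the speed satisfies |R'(t)| = 1/√(1 + sin²t), the unit tangent satisfies R'(t)/|R'(t)| = cos t·√(1 + sin²t) + i·sin²t, and the signed curvature equals 2·sin t. -/

import Mathlib

open Real Complex

noncomputable def xi (t : ℝ) : ℝ :=
  ∫ τ in (0:ℝ)..t, Real.sin τ ^ 2 / Real.sqrt (1 + Real.sin τ ^ 2)

noncomputable def R (t : ℝ) : ℂ := (Real.sin t : ℂ) + Complex.I * (xi t : ℂ)

/-- Planar cross product on ℂ: (u₁+iv₁) × (u₂+iv₂) = u₁v₂ − v₁u₂. -/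
def cross (u v : ℂ) : ℝ := u.re * v.im - u.im * v.re

noncomputable def gg (t : ℝ) : ℝ := Real.sin t ^ 2 / Real.sqrt (1 + Real.sin t ^ 2)

lemma sq_pos (t : ℝ) : 0 < 1 + Real.sin t ^ 2 := by positivity

lemma q_pos (t : ℝ) : 0 < Real.sqrt (1 + Real.sin t ^ 2) :=
  Real.sqrt_pos.mpr (sq_pos t)

lemma cont_gg : Continuous gg := by
  apply Continuous.div
  · fun_prop
  · fun_prop
  · intro x; exact (q_pos x).ne'

lemma hasDerivAt_xi (t : ℝ) : HasDerivAt xi (gg t) t := by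
  exact intervalIntegral.integral_hasDerivAt_right
    (cont_gg.intervalIntegrable _ _)
    (cont_gg.stronglyMeasurableAtFilter _ _)
    cont_gg.continuousAt

lemma hasDerivAt_R (t : ℝ) :
    HasDerivAt R ((Real.cos t : ℂ) + Complex.I * (gg t : ℂ)) t :=
  ((Real.hasDerivAt_sin t).ofReal_comp).add
    (((hasDerivAt_xi t).ofReal_comp).const_mul Complex.I)

lemma deriv_R : deriv R = fun t => (Real.cos t : ℂ) + Complex.I * (gg t : ℂ) :=
  funext fun t => (hasDerivAt_R t).deriv

lemma hasDerivAt_gg (t : ℝ) :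
    HasDerivAt gg
      ((2 * Real.sin t ^ 1 * Real.cos t * Real.sqrt (1 + Real.sin t ^ 2)
        - Real.sin t ^ 2 * (1 / (2 * Real.sqrt (1 + Real.sin t ^ 2)) * (2 * Real.sin t ^ 1 * Real.cos t)))
        / Real.sqrt (1 + Real.sin t ^ 2) ^ 2) t := by
  have hnum : HasDerivAt (fun t => Real.sin t ^ 2) (2 * Real.sin t ^ 1 * Real.cos t) t := by
    simpa using (Real.hasDerivAt_sin t).fun_pow 2
  have hinner : HasDerivAt (fun t => 1 + Real.sin t ^ 2) (2 * Real.sin t ^ 1 * Real.cos t) t := by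
    simpa using (hasDerivAt_const t (1:ℝ)).fun_add hnum
  have hden : HasDerivAt (fun t => Real.sqrt (1 + Real.sin t ^ 2))
      (1 / (2 * Real.sqrt (1 + Real.sin t ^ 2)) * (2 * Real.sin t ^ 1 * Real.cos t)) t :=
    (Real.hasDerivAt_sqrt (sq_pos t).ne').comp t hinner
  exact hnum.div hden (q_pos t).ne'

theorem R_speed_tangent_curvature (t : ℝ) :
    ‖deriv R t‖ = 1 / Real.sqrt (1 + Real.sin t ^ 2) ∧
    deriv R t / (‖deriv R t‖ : ℂ)
      = ((Real.cos t * Real.sqrt (1 + Real.sin t ^ 2) : ℝ) : ℂ)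
        + Complex.I * ((Real.sin t ^ 2 : ℝ) : ℂ) ∧
    cross (deriv R t) (deriv (deriv R) t) / ‖deriv R t‖ ^ 3
      = 2 * Real.sin t := by
  set s := Real.sin t with hs
  set c := Real.cos t with hc
  set q := Real.sqrt (1 + s ^ 2) with hqdef
  have hq0 : 0 < q := q_pos t
  have hq2 : q ^ 2 = 1 + s ^ 2 := Real.sq_sqrt (sq_pos t).le
  have hc2 : c ^ 2 = 1 - s ^ 2 := by
    have := Real.sin_sq_add_cos_sq t; rw [← hs, ← hc] at this; linarith
  have hgg : gg t = s ^ 2 / q := rfl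
  have habs : ‖deriv R t‖ = 1 / q := by
    rw [deriv_R]
    have h1 : ((c:ℂ) + Complex.I * ((gg t : ℝ):ℂ)) = ((c:ℝ):ℂ) + ((gg t : ℝ):ℂ) * Complex.I := by
      ring
    show ‖(c:ℂ) + Complex.I * ((gg t : ℝ):ℂ)‖ = 1/q
    rw [h1, Complex.norm_add_mul_I]
    rw [show c ^ 2 + gg t ^ 2 = (1/q)^2 by
      rw [hgg]; field_simp; nlinarith [hq2, hc2]]
    exact Real.sqrt_sq (by positivity)
  refine ⟨habs, ?_, ?_⟩
  · rw [habs, deriv_R]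
    show ((c:ℂ) + Complex.I * ((gg t : ℝ):ℂ)) / (((1/q : ℝ)):ℂ) = _
    rw [hgg]
    have hqC : ((q:ℝ):ℂ) ≠ 0 := by exact_mod_cast hq0.ne'
    push_cast
    field_simp
    try ring
  · have hd2 : deriv (deriv R) t =
        ((-s : ℝ):ℂ) + Complex.I *
          (((2 * s ^ 1 * c * q - s ^ 2 * (1 / (2 * q) * (2 * s ^ 1 * c))) / q ^ 2 : ℝ):ℂ) := by
      rw [deriv_R]
      exact (((Real.hasDerivAt_cos t).ofReal_comp).add
        (((hasDerivAt_gg t).ofReal_comp).const_mul Complex.I)).deriv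
    rw [habs, hd2, deriv_R]
    simp only [cross, hgg]
    simp only [Complex.add_re, Complex.add_im, Complex.ofReal_re, Complex.ofReal_im,
      Complex.mul_re, Complex.mul_im, Complex.I_re, Complex.I_im]
    rw [← hc]
    field_simp
    linear_combination q*s*(2*q^2-s^2)*hc2 + q*s*(2-s^2)*hq2
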